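/- For every side-information digraph G with at most 4 vertices, ℓ*(G) = mais(G) = minrank(G). -/

import Mathlib

set_option maxRecDepth 8000
set_option synthInstance.maxSize 2000
set_option synthInstance.maxHeartbeats 1000000
set_option linter.unusedVariables false


/-- `ε` is a (zero-error) index code for the side-information digraph `G` on `Fin n`:
each receiver `i` can decode `x i` from the codeword and its side information
`{x j : G i j}`. Messages and code symbols are bits, modeled as `ZMod 2`. -/
def IsIndexCode {n ℓ : ℕ} (G : Fin n → Fin n → Prop)
    (ε : (Fin n → ZMod 2) → (Fin ℓ → ZMod 2)) : Prop :=
  ∀ i : Fin n, ∃ δ : (Fin ℓ → ZMod 2) → ({j : Fin n // G i j} → ZMod 2) → ZMod 2,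
    ∀ x : Fin n → ZMod 2, δ (ε x) (fun j => x j.1) = x i

/-- The optimal index codelength `ℓ*(G)`. -/
noncomputable def optLen {n : ℕ} (G : Fin n → Fin n → Prop) : ℕ :=
  sInf {ℓ : ℕ | ∃ ε : (Fin n → ZMod 2) → (Fin ℓ → ZMod 2), IsIndexCode G ε}

/-- The subgraph of `G` induced on the vertex set `S` has no directed cycle. -/
def AcyclicOn {n : ℕ} (G : Fin n → Fin n → Prop) (S : Finset (Fin n)) : Prop :=
  ∀ i : Fin n, ¬ Relation.TransGen (fun a b => G a b ∧ a ∈ S ∧ b ∈ S) i i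

/-- `mais G`: the order of a maximum acyclic induced subgraph of `G`. -/
noncomputable def mais {n : ℕ} (G : Fin n → Fin n → Prop) : ℕ :=
  sSup {k : ℕ | ∃ S : Finset (Fin n), S.card = k ∧ AcyclicOn G S}

/-- `minrank G`: the minimum rank over `GF(2)` of a matrix fitting `G`
(ones on the diagonal, zero at off-diagonal non-arcs). -/
noncomputable def minrank {n : ℕ} (G : Fin n → Fin n → Prop) : ℕ :=
  sInf {r : ℕ | ∃ M : Matrix (Fin n) (Fin n) (ZMod 2),
    (∀ i, M i i = 1) ∧ (∀ i j, i ≠ j → ¬ G i j → M i j = 0) ∧ M.rank = r}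

/-- `G` contains an undirected cycle of length `k` (`k ≥ 3`): `k` distinct
vertices, cyclically arranged, with consecutive ones joined by edges
(arcs in both directions). -/
def HasUndirCycleLen {n : ℕ} (G : Fin n → Fin n → Prop) (k : ℕ) : Prop :=
  3 ≤ k ∧ ∃ v : ZMod k → Fin n, Function.Injective v ∧
    ∀ t : ZMod k, G (v t) (v (t + 1)) ∧ G (v (t + 1)) (v t)

/-- The set of edges of `G`, each edge `i - j` (both arcs present) recorded as
the unordered pair `{i, j}`. -/
def edgeSet {n : ℕ} (G : Fin n → Fin n → Prop) : Set (Finset (Fin n)) :=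
  {e | ∃ i j : Fin n, i ≠ j ∧ G i j ∧ G j i ∧ e = ({i, j} : Finset (Fin n))}

section Helpers
variable {n : ℕ} {G : Fin n → Fin n → Prop}

lemma codeSet_nonempty : ∃ ℓ, ∃ ε : (Fin n → ZMod 2) → (Fin ℓ → ZMod 2), IsIndexCode G ε :=
  ⟨n, id, fun i => ⟨fun y _ => y i, fun _ => rfl⟩⟩

lemma acyclicOn_of_order (S : Finset (Fin n)) (ρ : Fin n → ℕ)
    (h : ∀ a b, a ∈ S → b ∈ S → G a b → ρ a < ρ b) : AcyclicOn G S := by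
  intro i hi
  have mono : ∀ a b : Fin n, (G a b ∧ a ∈ S ∧ b ∈ S) → ρ a < ρ b :=
    fun a b hab => h a b hab.2.1 hab.2.2 hab.1
  have : Relation.TransGen (fun a b : Fin n => ρ a < ρ b) i i := Relation.TransGen.mono mono _ _ hi
  have ht : Transitive (fun a b : Fin n => ρ a < ρ b) := fun _ _ _ => lt_trans
  haveI hinst : IsTrans (Fin n) (fun a b : Fin n => ρ a < ρ b) := ⟨fun _ _ _ => lt_trans⟩
  rw [Relation.transGen_eq_self] at this
  exact lt_irrefl _ this

lemma acyclicOn_empty : AcyclicOn G ∅ :=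
  acyclicOn_of_order ∅ 0 (fun a _ ha => by simp at ha)

lemma mais_bddAbove : BddAbove {k : ℕ | ∃ S : Finset (Fin n), S.card = k ∧ AcyclicOn G S} := by
  refine ⟨n, fun k hk => ?_⟩
  obtain ⟨S, hS, -⟩ := hk
  simpa [hS] using (S.card_le_univ.trans_eq (by simp))

lemma le_mais {S : Finset (Fin n)} (h : AcyclicOn G S) : S.card ≤ mais G :=
  le_csSup mais_bddAbove ⟨S, rfl, h⟩

lemma mais_nonempty : Set.Nonempty {k : ℕ | ∃ S : Finset (Fin n), S.card = k ∧ AcyclicOn G S} :=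
  ⟨0, ∅, by simp, acyclicOn_empty⟩

/-- every nonempty subset of an acyclic set has a "sink": a vertex with no
out-arc into the subset. -/
lemma exists_sink {S D : Finset (Fin n)} (hDS : D ⊆ S) (hne : D.Nonempty)
    (hac : AcyclicOn G S) : ∃ i ∈ D, ∀ j ∈ D, ¬ G i j := by
  by_contra hcon
  push_neg at hcon
  have hf : ∀ i : {x // x ∈ D}, ∃ j : {x // x ∈ D}, G i.1 j.1 := by
    rintro ⟨i, hi⟩
    obtain ⟨j, hj, hGij⟩ := hcon i hi
    exact ⟨⟨j, hj⟩, hGij⟩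
  choose f hf' using hf
  obtain ⟨i₀, hi₀⟩ := hne
  set r : Fin n → Fin n → Prop := fun a b => G a b ∧ a ∈ S ∧ b ∈ S with hr
  have key : ∀ (k : ℕ) (x : {x // x ∈ D}), Relation.TransGen r x.1 (f^[k+1] x).1 := by
    intro k
    induction k with
    | zero => intro x; exact Relation.TransGen.single ⟨hf' x, hDS x.2, hDS (f x).2⟩
    | succ k ih =>
      intro x
      have : Relation.TransGen r (f^[k+1] x).1 (f (f^[k+1] x)).1 :=
        Relation.TransGen.single ⟨hf' _, hDS (f^[k+1] x).2, hDS (f (f^[k+1] x)).2⟩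
      have h2 := (ih x).trans this
      simpa [Function.iterate_succ_apply'] using h2
  obtain ⟨a, b, hne', hab⟩ :=
    Finite.exists_ne_map_eq_of_infinite (fun k : ℕ => f^[k] ⟨i₀, hi₀⟩)

  rcases hne'.lt_or_gt with h | h
  · obtain ⟨d, hd⟩ := Nat.exists_eq_add_of_lt h
    have := key d (f^[a] ⟨i₀, hi₀⟩)
    rw [← Function.iterate_add_apply] at this
    have he : d + 1 + a = b := by omega
    rw [he, ← hab] at this
    exact hac _ this
  · obtain ⟨d, hd⟩ := Nat.exists_eq_add_of_lt h
    have := key d (f^[b] ⟨i₀, hi₀⟩)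
    rw [← Function.iterate_add_apply] at this
    have he : d + 1 + b = a := by omega
    rw [he, hab] at this
    exact hac _ this

end Helpers

section PartA
variable {n : ℕ} {G : Fin n → Fin n → Prop}

lemma mais_le_optLen : mais G ≤ optLen G := by
  classical
  have hmem := Nat.sInf_mem (s := {ℓ : ℕ | ∃ ε : (Fin n → ZMod 2) → (Fin ℓ → ZMod 2),
      IsIndexCode G ε}) (codeSet_nonempty)
  set L := optLen G with hL
  obtain ⟨ε, hε⟩ := hmem
  refine csSup_le mais_nonempty ?_
  rintro k ⟨S, hcard, hac⟩
  -- injection from functions on S into codewords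
  set ext : ({x // x ∈ S} → ZMod 2) → (Fin n → ZMod 2) :=
    fun z j => if h : j ∈ S then z ⟨j, h⟩ else 0 with hext
  have hinj : Function.Injective (fun z => ε (ext z)) := by
    intro z z' heq
    by_contra hne
    obtain ⟨j₀, hj₀⟩ := Function.ne_iff.1 hne
    set D : Finset (Fin n) := S.filter (fun j => ext z j ≠ ext z' j) with hD
    have hDS : D ⊆ S := Finset.filter_subset _ _
    have hDne : D.Nonempty := by
      refine ⟨j₀.1, Finset.mem_filter.2 ⟨j₀.2, ?_⟩⟩
      simpa [hext] using hj₀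
    obtain ⟨i, hiD, hsink⟩ := exists_sink hDS hDne hac
    obtain ⟨δ, hδ⟩ := hε i
    have h1 := hδ (ext z)
    have h2 := hδ (ext z')
    have hside : (fun j : {j // G i j} => ext z j.1) = (fun j : {j // G i j} => ext z' j.1) := by
      funext j
      by_contra hne2
      have hjS : j.1 ∈ S := by
        by_contra hjS
        simp [hext, hjS] at hne2
      have : j.1 ∈ D := Finset.mem_filter.2 ⟨hjS, hne2⟩
      exact hsink j.1 this j.2
    simp only at heq
    rw [heq, hside] at h1
    rw [h1] at h2
    have hdiff := (Finset.mem_filter.1 hiD).2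
    exact hdiff h2
  have hcardle := Fintype.card_le_of_injective _ hinj
  simp only [Fintype.card_fun, Fintype.card_coe, ZMod.card, Fintype.card_fin, hcard] at hcardle
  exact (Nat.pow_le_pow_iff_right (le_refl 2)).1 hcardle

end PartA

section PartB
variable {n : ℕ} {G : Fin n → Fin n → Prop}

lemma minrankSet_nonempty :
    Set.Nonempty {r : ℕ | ∃ M : Matrix (Fin n) (Fin n) (ZMod 2),
      (∀ i, M i i = 1) ∧ (∀ i j, i ≠ j → ¬ G i j → M i j = 0) ∧ M.rank = r} :=
  ⟨(1 : Matrix (Fin n) (Fin n) (ZMod 2)).rank, 1,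
    fun i => Matrix.one_apply_eq i, fun i j hij _ => Matrix.one_apply_ne hij, rfl⟩

lemma zmod2_add_self : ∀ a : ZMod 2, a + a = 0 := by decide

lemma optLen_le_minrank (hG : ∀ i, ¬ G i i) : optLen G ≤ minrank G := by
  classical
  obtain ⟨M, hdiag, hfit, hrank⟩ := Nat.sInf_mem (minrankSet_nonempty (G := G))
  set V : Submodule (ZMod 2) (Fin n → ZMod 2) := Submodule.span (ZMod 2) (Set.range M) with hV
  have hfr : Module.finrank (ZMod 2) V = M.rank := (Matrix.rank_eq_finrank_span_row M).symm
  let b : Module.Basis (Fin (Module.finrank (ZMod 2) V)) (ZMod 2) V :=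
    Module.finBasis (ZMod 2) V
  set ℓ := Module.finrank (ZMod 2) V with hℓ
  set ε : (Fin n → ZMod 2) → (Fin ℓ → ZMod 2) :=
    fun x k => ∑ j, x j * (b k : Fin n → ZMod 2) j with hε
  have hcode : IsIndexCode G ε := by
    intro i
    have hMiV : M i ∈ V := Submodule.subset_span (Set.mem_range_self i)
    set c := b.repr ⟨M i, hMiV⟩ with hc
    refine ⟨fun y s => (∑ k, c k * y k) + (∑ j : {j // G i j}, M i j.1 * s j), ?_⟩
    intro x
    set F : Finset (Fin n) := Finset.univ.filter (fun j => G i j) with hF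
    have hb : ∀ j, (∑ k, c k * (b k : Fin n → ZMod 2) j) = M i j := by
      intro j
      have h := congrArg (fun v : V => (v : Fin n → ZMod 2) j) (b.sum_repr ⟨M i, hMiV⟩)
      simp only [Submodule.coe_sum, Submodule.coe_smul, Finset.sum_apply, Pi.smul_apply, smul_eq_mul] at h
      exact h
    have hsum1 : (∑ k, c k * ε x k) = ∑ j, x j * M i j := by
      have h1 : ∀ k, c k * ε x k = ∑ j, x j * (c k * (b k : Fin n → ZMod 2) j) := by
        intro k
        rw [hε, Finset.mul_sum]
        exact Finset.sum_congr rfl (fun j _ => by ring)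
      calc (∑ k, c k * ε x k)
          = ∑ k, ∑ j, x j * (c k * (b k : Fin n → ZMod 2) j) :=
            Finset.sum_congr rfl (fun k _ => h1 k)
        _ = ∑ j, ∑ k, x j * (c k * (b k : Fin n → ZMod 2) j) := Finset.sum_comm
        _ = ∑ j, x j * (∑ k, c k * (b k : Fin n → ZMod 2) j) := by
            refine Finset.sum_congr rfl (fun j _ => ?_)
            rw [Finset.mul_sum]
        _ = ∑ j, x j * M i j := Finset.sum_congr rfl (fun j _ => by rw [hb j])
    have hsum2 : (∑ j : {j // G i j}, M i j.1 * x j.1) = ∑ j ∈ F, M i j * x j := by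
      rw [hF]
      exact (Finset.sum_subtype _ (by intro j; simp) (fun j => M i j * x j)).symm
    have hsplit : (∑ j, x j * M i j) = (∑ j ∈ F, M i j * x j) + x i := by
      rw [← Finset.sum_filter_add_sum_filter_not Finset.univ (fun j => G i j)
        (fun j => x j * M i j)]
      congr 1
      · exact Finset.sum_congr rfl (fun j _ => mul_comm _ _)
      · rw [Finset.sum_eq_single i]
        · rw [hdiag i, mul_one]
        · intro j hj hji
          rw [hfit i j (Ne.symm hji) (by simpa using (Finset.mem_filter.1 hj).2), mul_zero]
        · intro h
          simp [hG i] at h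
    show (∑ k, c k * ε x k) + (∑ j : {j // G i j}, M i j.1 * x j.1) = x i
    rw [hsum1, hsum2, hsplit, add_right_comm, zmod2_add_self, zero_add]
  have hle : optLen G ≤ ℓ := Nat.sInf_le ⟨ε, hcode⟩
  calc optLen G ≤ ℓ := hle
    _ = M.rank := hfr
    _ = minrank G := hrank

end PartB

section PartCInfra
variable {n : ℕ} {G : Fin n → Fin n → Prop}

lemma minrank_le_of_fit (M : Matrix (Fin n) (Fin n) (ZMod 2)) (hdiag : ∀ i, M i i = 1)
    (hfit : ∀ i j, i ≠ j → ¬ G i j → M i j = 0) {r : ℕ} (hr : M.rank ≤ r) :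
    minrank G ≤ r :=
  le_trans (Nat.sInf_le ⟨M, hdiag, hfit, rfl⟩) hr

lemma rank_le_of_rows_mem {k : ℕ} (M : Matrix (Fin n) (Fin n) (ZMod 2))
    (f : Fin k → Fin n → ZMod 2)
    (h : ∀ i, M i ∈ Submodule.span (ZMod 2) (Set.range f)) : M.rank ≤ k := by
  rw [Matrix.rank_eq_finrank_span_row]
  have hle : Submodule.span (ZMod 2) (Set.range M) ≤
      Submodule.span (ZMod 2) (Set.range f) := by
    rw [Submodule.span_le]
    rintro x ⟨i, rfl⟩
    exact h i
  calc Module.finrank (ZMod 2) (Submodule.span (ZMod 2) (Set.range M))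
      ≤ Module.finrank (ZMod 2) (Submodule.span (ZMod 2) (Set.range f)) :=
        Submodule.finrank_mono hle
    _ ≤ Fintype.card (Fin k) := finrank_range_le_card f
    _ = k := Fintype.card_fin k

lemma minrank_le_n : minrank G ≤ n := by
  refine minrank_le_of_fit 1 (fun i => Matrix.one_apply_eq i)
    (fun i j hij _ => Matrix.one_apply_ne hij) ?_
  rw [Matrix.rank_one]
  simp

/-- if the whole graph has a cheap "successor structure", minrank ≤ n - 1. -/
lemma minrank_le_pred (S : Finset (Fin n)) (hne : S.Nonempty) (σ : Fin n → Fin n)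
    (hσ : ∀ i ∈ S, σ i ∈ S ∧ σ i ≠ i ∧ G i (σ i)) : minrank G ≤ n - 1 := by
  classical
  set M : Matrix (Fin n) (Fin n) (ZMod 2) :=
    Matrix.of (fun i => Pi.single i 1 + (if i ∈ S then Pi.single (σ i) 1 else 0)) with hM
  have hdiag : ∀ i, M i i = 1 := by
    intro i
    by_cases hi : i ∈ S
    · simp [hM, hi, Pi.single_eq_of_ne (M := fun _ => ZMod 2) (Ne.symm (hσ i hi).2.1) 1]
    · simp [hM, hi]
  have hfit : ∀ i j, i ≠ j → ¬ G i j → M i j = 0 := by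
    intro i j hij hnG
    have h1 : Pi.single (M := fun _ => ZMod 2) i 1 j = 0 := Pi.single_eq_of_ne (M := fun _ => ZMod 2) (Ne.symm hij) 1
    by_cases hi : i ∈ S
    · have : σ i ≠ j := by
        intro h
        exact hnG (h ▸ (hσ i hi).2.2)
      simp [hM, hi, h1, Pi.single_eq_of_ne (M := fun _ => ZMod 2) (Ne.symm this)]
    · simp [hM, hi, h1]
  -- all rows lie in the kernel of the nonzero functional ∑_{v ∈ S} x v
  set φ : (Fin n → ZMod 2) →ₗ[ZMod 2] ZMod 2 := ∑ v ∈ S, LinearMap.proj v with hφ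
  have hφapp : ∀ x, φ x = ∑ v ∈ S, x v := by
    intro x
    simp [hφ]
  have hrows : ∀ i, M i ∈ LinearMap.ker φ := by
    intro i
    have hsing : ∀ a : Fin n, (∑ v ∈ S, Pi.single a (1 : ZMod 2) v)
        = if a ∈ S then 1 else 0 := by
      intro a
      by_cases ha : a ∈ S
      · rw [Finset.sum_eq_single a]
        · simp [ha]
        · intro b _ hba; exact Pi.single_eq_of_ne (M := fun _ => ZMod 2) hba 1
        · intro h; exact absurd ha h
      · rw [if_neg ha, Finset.sum_eq_zero]
        intro b hb
        exact Pi.single_eq_of_ne (M := fun _ => ZMod 2) (fun (h : b = a) => ha (h ▸ hb)) 1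
    rw [LinearMap.mem_ker, hφapp]
    by_cases hi : i ∈ S
    · have h2 := (hσ i hi).1
      have hrow : M i = Pi.single i 1 + Pi.single (σ i) 1 := by
        funext j; simp [hM, Matrix.of_apply, hi]
      rw [hrow]
      simp only [Pi.add_apply]
      rw [Finset.sum_add_distrib, hsing, hsing, if_pos hi, if_pos h2]
      exact zmod2_add_self 1
    · have hrow : M i = Pi.single i 1 := by
        funext j; simp [hM, Matrix.of_apply, hi]
      rw [hrow, hsing, if_neg hi]
  have hφne : φ ≠ 0 := by
    obtain ⟨s₀, hs₀⟩ := hne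
    intro h
    have := hφapp (Pi.single s₀ 1)
    rw [h] at this
    simp only [LinearMap.zero_apply] at this
    rw [Finset.sum_eq_single s₀] at this
    · simp at this
    · intro b _ hbs; exact Pi.single_eq_of_ne (M := fun _ => ZMod 2) hbs 1
    · intro h'; exact absurd hs₀ h'
  have hker : Module.finrank (ZMod 2) (LinearMap.ker φ) ≤ n - 1 := by
    have hrr := LinearMap.finrank_range_add_finrank_ker φ
    have hrange : 1 ≤ Module.finrank (ZMod 2) (LinearMap.range φ) := by
      by_contra h
      push_neg at h
      have h0 : Module.finrank (ZMod 2) (LinearMap.range φ) = 0 := by omega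
      have : LinearMap.range φ = ⊥ := Submodule.finrank_eq_zero.1 h0
      exact hφne (LinearMap.range_eq_bot.1 this)
    have hdom : Module.finrank (ZMod 2) (Fin n → ZMod 2) = n := by
      simp [Module.finrank_pi]
    omega
  refine minrank_le_of_fit M hdiag hfit ?_
  rw [Matrix.rank_eq_finrank_span_row]
  have hle : Submodule.span (ZMod 2) (Set.range M) ≤ LinearMap.ker φ := by
    rw [Submodule.span_le]
    rintro x ⟨i, rfl⟩
    exact hrows i
  exact le_trans (Submodule.finrank_mono hle) hker

end PartCInfra

section Orders
variable {n : ℕ} {G : Fin n → Fin n → Prop}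

lemma D3 : ∀ r0 r1 r2 : Fin 3 → Bool,
    (¬(r0 1 = true ∧ r1 0 = true) ∧ ¬(r0 2 = true ∧ r2 0 = true) ∧
     ¬(r1 2 = true ∧ r2 1 = true) ∧
     ¬(r0 1 = true ∧ r1 2 = true ∧ r2 0 = true) ∧
     ¬(r0 2 = true ∧ r2 1 = true ∧ r1 0 = true)) →
    ∃ ρ : Fin 3 → Fin 3,
      (r0 1 = true → ρ 0 < ρ 1) ∧ (r0 2 = true → ρ 0 < ρ 2) ∧
      (r1 0 = true → ρ 1 < ρ 0) ∧ (r1 2 = true → ρ 1 < ρ 2) ∧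
      (r2 0 = true → ρ 2 < ρ 0) ∧ (r2 1 = true → ρ 2 < ρ 1) := by decide

lemma acyclic_pair (hG : ∀ i, ¬ G i i) (a b : Fin n) (hab : a ≠ b)
    (d : ¬(G a b ∧ G b a)) : AcyclicOn G {a, b} := by
  by_cases hGab : G a b
  · have hnba : ¬ G b a := fun h => d ⟨hGab, h⟩
    refine acyclicOn_of_order _ (fun x => if x = b then 1 else 0) ?_
    intro x y hx hy hxy
    simp only [Finset.mem_insert, Finset.mem_singleton] at hx hy
    rcases hx with rfl | rfl <;> rcases hy with rfl | rfl
    · exact absurd hxy (hG _)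
    · simp [hab, Ne.symm hab]
    · exact absurd hxy hnba
    · exact absurd hxy (hG _)
  · refine acyclicOn_of_order _ (fun x => if x = a then 1 else 0) ?_
    intro x y hx hy hxy
    simp only [Finset.mem_insert, Finset.mem_singleton] at hx hy
    rcases hx with rfl | rfl <;> rcases hy with rfl | rfl
    · exact absurd hxy (hG _)
    · exact absurd hxy hGab
    · simp [hab, Ne.symm hab]
    · exact absurd hxy (hG _)

lemma acyclic_triple (hG : ∀ i, ¬ G i i) (a b c : Fin n)
    (hab : a ≠ b) (hac : a ≠ c) (hbc : b ≠ c)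
    (dab : ¬(G a b ∧ G b a)) (dac : ¬(G a c ∧ G c a)) (dbc : ¬(G b c ∧ G c b))
    (t1 : ¬(G a b ∧ G b c ∧ G c a)) (t2 : ¬(G a c ∧ G c b ∧ G b a)) :
    AcyclicOn G {a, b, c} := by
  classical
  let r0 : Fin 3 → Bool := ![decide (G a a), decide (G a b), decide (G a c)]
  let r1 : Fin 3 → Bool := ![decide (G b a), decide (G b b), decide (G b c)]
  let r2 : Fin 3 → Bool := ![decide (G c a), decide (G c b), decide (G c c)]
  have e01 : r0 1 = decide (G a b) := rfl
  have e02 : r0 2 = decide (G a c) := rfl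
  have e10 : r1 0 = decide (G b a) := rfl
  have e12 : r1 2 = decide (G b c) := rfl
  have e20 : r2 0 = decide (G c a) := rfl
  have e21 : r2 1 = decide (G c b) := rfl
  obtain ⟨ρ, m01, m02, m10, m12, m20, m21⟩ := D3 r0 r1 r2 (by
    rw [e01, e02, e10, e12, e20, e21]
    simp only [decide_eq_true_eq]
    exact ⟨dab, dac, dbc, t1, t2⟩)
  rw [e01] at m01; rw [e02] at m02; rw [e10] at m10
  rw [e12] at m12; rw [e20] at m20; rw [e21] at m21
  refine acyclicOn_of_order _
    (fun x => if x = a then (ρ 0 : ℕ) else if x = b then (ρ 1 : ℕ) else if x = c then (ρ 2 : ℕ) else 0) ?_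
  intro x y hx hy hxy
  simp only [Finset.mem_insert, Finset.mem_singleton] at hx hy
  rcases hx with rfl | rfl | rfl <;> rcases hy with rfl | rfl | rfl <;> beta_reduce
  · exact absurd hxy (hG _)
  · rw [if_pos rfl, if_neg (Ne.symm hab), if_pos rfl]
    exact m01 (decide_eq_true hxy)
  · rw [if_pos rfl, if_neg (Ne.symm hac), if_neg (Ne.symm hbc), if_pos rfl]
    exact m02 (decide_eq_true hxy)
  · rw [if_neg (Ne.symm hab), if_pos rfl, if_pos rfl]
    exact m10 (decide_eq_true hxy)
  · exact absurd hxy (hG _)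
  · rw [if_neg (Ne.symm hab), if_pos rfl, if_neg (Ne.symm hac), if_neg (Ne.symm hbc), if_pos rfl]
    exact m12 (decide_eq_true hxy)
  · rw [if_neg (Ne.symm hac), if_neg (Ne.symm hbc), if_pos rfl, if_pos rfl]
    exact m20 (decide_eq_true hxy)
  · rw [if_neg (Ne.symm hac), if_neg (Ne.symm hbc), if_pos rfl, if_neg (Ne.symm hab), if_pos rfl]
    exact m21 (decide_eq_true hxy)
  · exact absurd hxy (hG _)

lemma exists_cycStruct (hG : ∀ i, ¬ G i i) (h : ¬ AcyclicOn G Finset.univ) :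
    ∃ S : Finset (Fin n), S.Nonempty ∧ ∃ σ : Fin n → Fin n,
      ∀ i ∈ S, σ i ∈ S ∧ σ i ≠ i ∧ G i (σ i) := by
  classical
  simp only [AcyclicOn, not_forall, not_not] at h
  obtain ⟨i₀, hi₀⟩ := h
  set r : Fin n → Fin n → Prop := fun a b => G a b ∧ a ∈ Finset.univ ∧ b ∈ Finset.univ with hr
  set S : Finset (Fin n) := Finset.univ.filter (fun i => Relation.TransGen r i i) with hS
  have hstep : ∀ i : Fin n, ∃ j, i ∈ S → (j ∈ S ∧ j ≠ i ∧ G i j) := by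
    intro i
    by_cases hi : i ∈ S
    · have htg : Relation.TransGen r i i := (Finset.mem_filter.1 hi).2
      obtain ⟨c, hic, hci⟩ := Relation.TransGen.head'_iff.1 htg
      refine ⟨c, fun _ => ⟨?_, ?_, hic.1⟩⟩
      · refine Finset.mem_filter.2 ⟨Finset.mem_univ c, ?_⟩
        exact Relation.TransGen.tail' hci hic
      · intro hci'
        exact hG i (hci' ▸ hic.1)
    · exact ⟨i, fun h' => absurd h' hi⟩
  choose σ hσ using hstep
  exact ⟨S, ⟨i₀, Finset.mem_filter.2 ⟨Finset.mem_univ i₀, hi₀⟩⟩, σ, fun i hi => hσ i hi⟩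

end Orders

section Rank2
variable {G : Fin 4 → Fin 4 → Prop}

lemma cover4 : ∀ p a b c x : Fin 4, p ≠ a → p ≠ b → p ≠ c → a ≠ b → a ≠ c → b ≠ c →
    (x = p ∨ x = a ∨ x = b ∨ x = c) := by decide

def w1 (x : Fin 4) : Fin 4 → ZMod 2 := fun j => if j = x then 1 else 0
def w2 (x y : Fin 4) : Fin 4 → ZMod 2 := fun j => if j = x then 1 else if j = y then 1 else 0
def w3 (x y z : Fin 4) : Fin 4 → ZMod 2 :=
  fun j => if j = x then 1 else if j = y then 1 else if j = z then 1 else 0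

lemma one_one : (1 : ZMod 2) + 1 = 0 := by decide

lemma rows_rank2 (u v : Fin 4 → ZMod 2) (M : Matrix (Fin 4) (Fin 4) (ZMod 2))
    (hrows : ∀ i, M i = u ∨ M i = v ∨ M i = u + v)
    (hdiag : ∀ i, M i i = 1) (hfit : ∀ i j, i ≠ j → ¬ G i j → M i j = 0) :
    minrank G ≤ 2 := by
  refine minrank_le_of_fit M hdiag hfit ?_
  refine rank_le_of_rows_mem M ![u, v] ?_
  intro i
  have hu : u ∈ Submodule.span (ZMod 2) (Set.range ![u, v]) :=
    Submodule.subset_span ⟨0, rfl⟩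
  have hv : v ∈ Submodule.span (ZMod 2) (Set.range ![u, v]) :=
    Submodule.subset_span ⟨1, rfl⟩
  rcases hrows i with h | h | h <;> rw [h]
  · exact hu
  · exact hv
  · exact Submodule.add_mem _ hu hv

/-- two disjoint digons -/
lemma con1 (p a b c : Fin 4) (hpa : p ≠ a) (hpb : p ≠ b) (hpc : p ≠ c)
    (hab : a ≠ b) (hac : a ≠ c) (hbc : b ≠ c)
    (e1 : G p a) (e2 : G a p) (e3 : G b c) (e4 : G c b) : minrank G ≤ 2 := by
  classical
  refine rows_rank2 (w2 p a) (w2 b c)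
    (Matrix.of (fun i => if i = p then w2 p a else if i = a then w2 p a else w2 b c))
    ?_ ?_ ?_
  · intro i
    rcases cover4 p a b c i hpa hpb hpc hab hac hbc with rfl | rfl | rfl | rfl
    · exact Or.inl (if_pos rfl)
    · exact Or.inl ((if_neg (Ne.symm hpa)).trans (if_pos rfl))
    · exact Or.inr (Or.inl ((if_neg (Ne.symm hpb)).trans (if_neg (Ne.symm hab))))
    · exact Or.inr (Or.inl ((if_neg (Ne.symm hpc)).trans (if_neg (Ne.symm hac))))
  · intro i
    rcases cover4 p a b c i hpa hpb hpc hab hac hbc with rfl | rfl | rfl | rfl <;>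
      simp [Matrix.of_apply, w2, hpa, hpb, hpc, hab, hac, hbc,
        Ne.symm hpa, Ne.symm hpb, Ne.symm hpc, Ne.symm hab, Ne.symm hac, Ne.symm hbc]
  · intro i j hij hnG
    have hi := cover4 p a b c i hpa hpb hpc hab hac hbc
    have hj := cover4 p a b c j hpa hpb hpc hab hac hbc
    rcases hi with rfl | rfl | rfl | rfl <;> rcases hj with rfl | rfl | rfl | rfl <;>
      first
        | exact absurd rfl hij
        | exact absurd e1 hnG
        | exact absurd e2 hnG
        | exact absurd e3 hnG
        | exact absurd e4 hnG
        | simp [Matrix.of_apply, w2, hpa, hpb, hpc, hab, hac, hbc,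
            Ne.symm hpa, Ne.symm hpb, Ne.symm hpc, Ne.symm hab, Ne.symm hac, Ne.symm hbc]

/-- digon triangle on `a b c` plus lone vertex `d` -/
lemma con2 (a b c d : Fin 4) (hab : a ≠ b) (hac : a ≠ c) (had : a ≠ d)
    (hbc : b ≠ c) (hbd : b ≠ d) (hcd : c ≠ d)
    (e1 : G a b) (e2 : G b a) (e3 : G a c) (e4 : G c a) (e5 : G b c) (e6 : G c b) :
    minrank G ≤ 2 := by
  classical
  refine rows_rank2 (w3 a b c) (w1 d)
    (Matrix.of (fun i => if i = d then w1 d else w3 a b c)) ?_ ?_ ?_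
  · intro i
    rcases cover4 a b c d i hab hac had hbc hbd hcd with rfl | rfl | rfl | rfl
    · exact Or.inl (if_neg had)
    · exact Or.inl (if_neg hbd)
    · exact Or.inl (if_neg hcd)
    · exact Or.inr (Or.inl (if_pos rfl))
  · intro i
    rcases cover4 a b c d i hab hac had hbc hbd hcd with rfl | rfl | rfl | rfl <;>
      simp [Matrix.of_apply, w1, w3, hab, hac, had, hbc, hbd, hcd,
        Ne.symm hab, Ne.symm hac, Ne.symm had, Ne.symm hbc, Ne.symm hbd, Ne.symm hcd]
  · intro i j hij hnG
    have hi := cover4 a b c d i hab hac had hbc hbd hcd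
    have hj := cover4 a b c d j hab hac had hbc hbd hcd
    rcases hi with rfl | rfl | rfl | rfl <;> rcases hj with rfl | rfl | rfl | rfl <;>
      first
        | exact absurd rfl hij
        | exact absurd e1 hnG
        | exact absurd e2 hnG
        | exact absurd e3 hnG
        | exact absurd e4 hnG
        | exact absurd e5 hnG
        | exact absurd e6 hnG
        | simp [Matrix.of_apply, w1, w3, hab, hac, had, hbc, hbd, hcd,
            Ne.symm hab, Ne.symm hac, Ne.symm had, Ne.symm hbc, Ne.symm hbd, Ne.symm hcd]

/-- digons p-a and p-b plus directed triangle a→b→c→a -/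
lemma con3 (p a b c : Fin 4) (hpa : p ≠ a) (hpb : p ≠ b) (hpc : p ≠ c)
    (hab : a ≠ b) (hac : a ≠ c) (hbc : b ≠ c)
    (e1 : G p a) (e2 : G a p) (e3 : G p b) (e4 : G b p)
    (e5 : G a b) (e6 : G b c) (e7 : G c a) : minrank G ≤ 2 := by
  classical
  refine rows_rank2 (w3 p a b) (w3 b c p)
    (Matrix.of (fun i => if i = p then w3 p a b else if i = a then w3 p a b
      else if i = b then w3 b c p else w3 p a b + w3 b c p)) ?_ ?_ ?_
  · intro i
    rcases cover4 p a b c i hpa hpb hpc hab hac hbc with rfl | rfl | rfl | rfl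
    · exact Or.inl (if_pos rfl)
    · exact Or.inl ((if_neg (Ne.symm hpa)).trans (if_pos rfl))
    · exact Or.inr (Or.inl
        ((if_neg (Ne.symm hpb)).trans ((if_neg (Ne.symm hab)).trans (if_pos rfl))))
    · exact Or.inr (Or.inr
        ((if_neg (Ne.symm hpc)).trans ((if_neg (Ne.symm hac)).trans (if_neg (Ne.symm hbc)))))
  · intro i
    rcases cover4 p a b c i hpa hpb hpc hab hac hbc with rfl | rfl | rfl | rfl <;>
      simp [Matrix.of_apply, w3, one_one, hpa, hpb, hpc, hab, hac, hbc,
        Ne.symm hpa, Ne.symm hpb, Ne.symm hpc, Ne.symm hab, Ne.symm hac, Ne.symm hbc]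
  · intro i j hij hnG
    have hi := cover4 p a b c i hpa hpb hpc hab hac hbc
    have hj := cover4 p a b c j hpa hpb hpc hab hac hbc
    rcases hi with rfl | rfl | rfl | rfl <;> rcases hj with rfl | rfl | rfl | rfl <;>
      first
        | exact absurd rfl hij
        | exact absurd e1 hnG
        | exact absurd e2 hnG
        | exact absurd e3 hnG
        | exact absurd e4 hnG
        | exact absurd e5 hnG
        | exact absurd e6 hnG
        | exact absurd e7 hnG
        | simp [Matrix.of_apply, w3, one_one, hpa, hpb, hpc, hab, hac, hbc,
            Ne.symm hpa, Ne.symm hpb, Ne.symm hpc, Ne.symm hab, Ne.symm hac, Ne.symm hbc]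

/-- digon p-a, triangle a→b→c→a, plus arcs c→p and p→b -/
lemma con4 (p a b c : Fin 4) (hpa : p ≠ a) (hpb : p ≠ b) (hpc : p ≠ c)
    (hab : a ≠ b) (hac : a ≠ c) (hbc : b ≠ c)
    (e1 : G p a) (e2 : G a p) (e3 : G a b) (e4 : G b c)
    (e5 : G c a) (e6 : G c p) (e7 : G p b) : minrank G ≤ 2 := by
  classical
  refine rows_rank2 (w3 p a b) (w2 b c)
    (Matrix.of (fun i => if i = p then w3 p a b else if i = a then w3 p a b
      else if i = b then w2 b c else w3 p a b + w2 b c)) ?_ ?_ ?_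
  · intro i
    rcases cover4 p a b c i hpa hpb hpc hab hac hbc with rfl | rfl | rfl | rfl
    · exact Or.inl (if_pos rfl)
    · exact Or.inl ((if_neg (Ne.symm hpa)).trans (if_pos rfl))
    · exact Or.inr (Or.inl
        ((if_neg (Ne.symm hpb)).trans ((if_neg (Ne.symm hab)).trans (if_pos rfl))))
    · exact Or.inr (Or.inr
        ((if_neg (Ne.symm hpc)).trans ((if_neg (Ne.symm hac)).trans (if_neg (Ne.symm hbc)))))
  · intro i
    rcases cover4 p a b c i hpa hpb hpc hab hac hbc with rfl | rfl | rfl | rfl <;>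
      simp [Matrix.of_apply, w2, w3, one_one, hpa, hpb, hpc, hab, hac, hbc,
        Ne.symm hpa, Ne.symm hpb, Ne.symm hpc, Ne.symm hab, Ne.symm hac, Ne.symm hbc]
  · intro i j hij hnG
    have hi := cover4 p a b c i hpa hpb hpc hab hac hbc
    have hj := cover4 p a b c j hpa hpb hpc hab hac hbc
    rcases hi with rfl | rfl | rfl | rfl <;> rcases hj with rfl | rfl | rfl | rfl <;>
      first
        | exact absurd rfl hij
        | exact absurd e1 hnG
        | exact absurd e2 hnG
        | exact absurd e3 hnG
        | exact absurd e4 hnG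
        | exact absurd e5 hnG
        | exact absurd e6 hnG
        | exact absurd e7 hnG
        | simp [Matrix.of_apply, w2, w3, one_one, hpa, hpb, hpc, hab, hac, hbc,
            Ne.symm hpa, Ne.symm hpb, Ne.symm hpc, Ne.symm hab, Ne.symm hac, Ne.symm hbc]

end Rank2

section Star
variable {G : Fin 4 → Fin 4 → Prop}

/-- hub `p`, digon-free triangle `a→b→c→a`. -/
lemma star4 (p a b c : Fin 4) (hpa : p ≠ a) (hpb : p ≠ b) (hpc : p ≠ c)
    (hab : a ≠ b) (hac : a ≠ c) (hbc : b ≠ c)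
    (hT : ∀ x y z : Fin 4, x ≠ y → x ≠ z → y ≠ z →
      (G x y ∧ G y x) ∨ (G x z ∧ G z x) ∨ (G y z ∧ G z y) ∨
      (G x y ∧ G y z ∧ G z x) ∨ (G x z ∧ G z y ∧ G y x))
    (dab : ¬(G a b ∧ G b a)) (dac : ¬(G a c ∧ G c a)) (dbc : ¬(G b c ∧ G c b))
    (t : G a b ∧ G b c ∧ G c a) : minrank G ≤ 2 := by
  have harc1 : ¬(G p b ∧ G b p) → ¬(G p c ∧ G c p) → G c p ∧ G p b := by
    intro dpb dpc
    rcases hT p b c hpb hpc hbc with d | d | d | tr | tr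
    · exact absurd d dpb
    · exact absurd d dpc
    · exact absurd d dbc
    · exact ⟨tr.2.2, tr.1⟩
    · exact absurd ⟨t.2.1, tr.2.1⟩ dbc
  have harc2 : ¬(G p c ∧ G c p) → ¬(G p a ∧ G a p) → G a p ∧ G p c := by
    intro dpc dpa
    rcases hT p c a hpc hpa (Ne.symm hac) with d | d | d | tr | tr
    · exact absurd d dpc
    · exact absurd d dpa
    · exact absurd ⟨d.2, d.1⟩ dac
    · exact ⟨tr.2.2, tr.1⟩
    · exact absurd ⟨tr.2.1, t.2.2⟩ dac
  have harc3 : ¬(G p a ∧ G a p) → ¬(G p b ∧ G b p) → G b p ∧ G p a := by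
    intro dpa dpb
    rcases hT p a b hpa hpb hab with d | d | d | tr | tr
    · exact absurd d dpa
    · exact absurd d dpb
    · exact absurd d dab
    · exact ⟨tr.2.2, tr.1⟩
    · exact absurd ⟨t.1, tr.2.1⟩ dab
  by_cases dpa : G p a ∧ G a p
  · by_cases dpb : G p b ∧ G b p
    · exact con3 p a b c hpa hpb hpc hab hac hbc dpa.1 dpa.2 dpb.1 dpb.2 t.1 t.2.1 t.2.2
    · by_cases dpc : G p c ∧ G c p
      · exact con3 p c a b hpc hpa hpb (Ne.symm hac) (Ne.symm hbc) hab
          dpc.1 dpc.2 dpa.1 dpa.2 t.2.2 t.1 t.2.1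
      · obtain ⟨e6, e7⟩ := harc1 dpb dpc
        exact con4 p a b c hpa hpb hpc hab hac hbc dpa.1 dpa.2 t.1 t.2.1 t.2.2 e6 e7
  · by_cases dpb : G p b ∧ G b p
    · by_cases dpc : G p c ∧ G c p
      · exact con3 p b c a hpb hpc hpa hbc (Ne.symm hab) (Ne.symm hac)
          dpb.1 dpb.2 dpc.1 dpc.2 t.2.1 t.2.2 t.1
      · obtain ⟨e6, e7⟩ := harc2 dpc dpa
        exact con4 p b c a hpb hpc hpa hbc (Ne.symm hab) (Ne.symm hac)
          dpb.1 dpb.2 t.2.1 t.2.2 t.1 e6 e7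
    · by_cases dpc : G p c ∧ G c p
      · obtain ⟨e6, e7⟩ := harc3 dpa dpb
        exact con4 p c a b hpc hpa hpb (Ne.symm hac) (Ne.symm hbc) hab
          dpc.1 dpc.2 t.2.2 t.1 t.2.1 e6 e7
      · obtain ⟨-, e7⟩ := harc1 dpb dpc
        obtain ⟨-, e6⟩ := harc2 dpc dpa
        exact absurd ⟨e6, (harc1 dpb dpc).1⟩ dpc

/-- hub `p`, digon-free triple `{a,b,c}` -/
lemma starw (p a b c : Fin 4) (hpa : p ≠ a) (hpb : p ≠ b) (hpc : p ≠ c)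
    (hab : a ≠ b) (hac : a ≠ c) (hbc : b ≠ c)
    (hT : ∀ x y z : Fin 4, x ≠ y → x ≠ z → y ≠ z →
      (G x y ∧ G y x) ∨ (G x z ∧ G z x) ∨ (G y z ∧ G z y) ∨
      (G x y ∧ G y z ∧ G z x) ∨ (G x z ∧ G z y ∧ G y x))
    (dab : ¬(G a b ∧ G b a)) (dac : ¬(G a c ∧ G c a)) (dbc : ¬(G b c ∧ G c b)) :
    minrank G ≤ 2 := by
  rcases hT a b c hab hac hbc with d | d | d | t | t
  · exact absurd d dab
  · exact absurd d dac
  · exact absurd d dbc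
  · exact star4 p a b c hpa hpb hpc hab hac hbc hT dab dac dbc t
  · exact star4 p a c b hpa hpc hpb hac hab (Ne.symm hbc) hT dac dab
      (fun h => dbc ⟨h.2, h.1⟩) t

lemma minrank_le_two
    (hT : ∀ x y z : Fin 4, x ≠ y → x ≠ z → y ≠ z →
      (G x y ∧ G y x) ∨ (G x z ∧ G z x) ∨ (G y z ∧ G z y) ∨
      (G x y ∧ G y z ∧ G z x) ∨ (G x z ∧ G z y ∧ G y x)) :
    minrank G ≤ 2 := by
  by_cases m1 : (G 0 1 ∧ G 1 0) ∧ (G 2 3 ∧ G 3 2)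
  · exact con1 0 1 2 3 (by decide) (by decide) (by decide) (by decide) (by decide) (by decide)
      m1.1.1 m1.1.2 m1.2.1 m1.2.2
  by_cases m2 : (G 0 2 ∧ G 2 0) ∧ (G 1 3 ∧ G 3 1)
  · exact con1 0 2 1 3 (by decide) (by decide) (by decide) (by decide) (by decide) (by decide)
      m2.1.1 m2.1.2 m2.2.1 m2.2.2
  by_cases m3 : (G 0 3 ∧ G 3 0) ∧ (G 1 2 ∧ G 2 1)
  · exact con1 0 3 1 2 (by decide) (by decide) (by decide) (by decide) (by decide) (by decide)
      m3.1.1 m3.1.2 m3.2.1 m3.2.2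
  by_cases t012 : (G 0 1 ∧ G 1 0) ∧ (G 0 2 ∧ G 2 0) ∧ (G 1 2 ∧ G 2 1)
  · exact con2 0 1 2 3 (by decide) (by decide) (by decide) (by decide) (by decide) (by decide)
      t012.1.1 t012.1.2 t012.2.1.1 t012.2.1.2 t012.2.2.1 t012.2.2.2
  by_cases t013 : (G 0 1 ∧ G 1 0) ∧ (G 0 3 ∧ G 3 0) ∧ (G 1 3 ∧ G 3 1)
  · exact con2 0 1 3 2 (by decide) (by decide) (by decide) (by decide) (by decide) (by decide)
      t013.1.1 t013.1.2 t013.2.1.1 t013.2.1.2 t013.2.2.1 t013.2.2.2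
  by_cases t023 : (G 0 2 ∧ G 2 0) ∧ (G 0 3 ∧ G 3 0) ∧ (G 2 3 ∧ G 3 2)
  · exact con2 0 2 3 1 (by decide) (by decide) (by decide) (by decide) (by decide) (by decide)
      t023.1.1 t023.1.2 t023.2.1.1 t023.2.1.2 t023.2.2.1 t023.2.2.2
  by_cases t123 : (G 1 2 ∧ G 2 1) ∧ (G 1 3 ∧ G 3 1) ∧ (G 2 3 ∧ G 3 2)
  · exact con2 1 2 3 0 (by decide) (by decide) (by decide) (by decide) (by decide) (by decide)
      t123.1.1 t123.1.2 t123.2.1.1 t123.2.1.2 t123.2.2.1 t123.2.2.2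
  have SW := starw (G := G)
  by_cases d01 : G 0 1 ∧ G 1 0
  · have nd23 : ¬(G 2 3 ∧ G 3 2) := fun h => m1 ⟨d01, h⟩
    by_cases d12 : G 1 2 ∧ G 2 1
    · exact SW 1 0 2 3 (by decide) (by decide) (by decide) (by decide) (by decide) (by decide)
        hT (fun h => t012 ⟨d01, h, d12⟩) (fun h => m3 ⟨h, d12⟩) nd23
    · by_cases d13 : G 1 3 ∧ G 3 1
      · exact SW 1 0 2 3 (by decide) (by decide) (by decide) (by decide) (by decide) (by decide)
          hT (fun h => m2 ⟨h, d13⟩) (fun h => t013 ⟨d01, h, d13⟩) nd23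
      · exact SW 0 1 2 3 (by decide) (by decide) (by decide) (by decide) (by decide) (by decide)
          hT d12 d13 nd23
  · by_cases d23 : G 2 3 ∧ G 3 2
    · by_cases d03 : G 0 3 ∧ G 3 0
      · exact SW 3 0 1 2 (by decide) (by decide) (by decide) (by decide) (by decide) (by decide)
          hT d01 (fun h => t023 ⟨h, d03, d23⟩) (fun h => m3 ⟨d03, h⟩)
      · by_cases d02 : G 0 2 ∧ G 2 0
        · exact SW 2 0 1 3 (by decide) (by decide) (by decide) (by decide) (by decide) (by decide)
            hT d01 d03 (fun h => m2 ⟨d02, h⟩)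
        · by_cases d12 : G 1 2 ∧ G 2 1
          · exact SW 2 0 1 3 (by decide) (by decide) (by decide) (by decide) (by decide)
              (by decide) hT d01 d03 (fun h => t123 ⟨d12, h, d23⟩)
          · exact SW 3 0 1 2 (by decide) (by decide) (by decide) (by decide) (by decide)
              (by decide) hT d01 d02 d12
    · by_cases d02 : G 0 2 ∧ G 2 0
      · by_cases d12 : G 1 2 ∧ G 2 1
        · exact SW 2 0 1 3 (by decide) (by decide) (by decide) (by decide) (by decide)
            (by decide) hT d01 (fun h => m3 ⟨h, d12⟩) (fun h => m2 ⟨d02, h⟩)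
        · exact SW 0 1 2 3 (by decide) (by decide) (by decide) (by decide) (by decide)
            (by decide) hT d12 (fun h => m2 ⟨d02, h⟩) d23
      · by_cases d13 : G 1 3 ∧ G 3 1
        · by_cases d03 : G 0 3 ∧ G 3 0
          · exact SW 3 0 1 2 (by decide) (by decide) (by decide) (by decide) (by decide)
              (by decide) hT d01 d02 (fun h => m3 ⟨d03, h⟩)
          · exact SW 1 0 2 3 (by decide) (by decide) (by decide) (by decide) (by decide)
              (by decide) hT d02 d03 d23
        · by_cases d03 : G 0 3 ∧ G 3 0
          · exact SW 3 0 1 2 (by decide) (by decide) (by decide) (by decide) (by decide)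
              (by decide) hT d01 d02 (fun h => m3 ⟨d03, h⟩)
          · exact SW 2 0 1 3 (by decide) (by decide) (by decide) (by decide) (by decide)
              (by decide) hT d01 d03 d13
end Star

section Final
variable {n : ℕ} {G : Fin n → Fin n → Prop}

lemma acyclicOn_of_no_rel {S : Finset (Fin n)} (h : ∀ x y, x ∈ S → y ∈ S → ¬ G x y) :
    AcyclicOn G S := by
  intro i htg
  obtain ⟨b, hb, -⟩ := Relation.TransGen.head'_iff.1 htg
  exact h _ _ hb.2.1 hb.2.2 hb.1

lemma minrank_le_one (hG : ∀ i, ¬ G i i) (h : ∀ a b : Fin n, a ≠ b → G a b) :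
    minrank G ≤ 1 := by
  refine minrank_le_of_fit (Matrix.of (fun _ _ => (1 : ZMod 2))) (fun _ => rfl)
    (fun i j hij hnG => absurd (h i j hij) hnG) ?_
  refine rank_le_of_rows_mem _ ![fun _ => (1 : ZMod 2)] ?_
  intro i
  exact Submodule.subset_span ⟨0, rfl⟩

lemma one_le_mais (hG : ∀ i, ¬ G i i) (i : Fin n) : 1 ≤ mais G := by
  have hA : AcyclicOn G {i} := by
    refine acyclicOn_of_no_rel ?_
    intro x y hx hy hxy
    simp only [Finset.mem_singleton] at hx hy
    subst hx; subst hy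
    exact hG _ hxy
  have := le_mais hA
  simpa using this

lemma minrank_le_mais (hn : n ≤ 4) (hG : ∀ i, ¬ G i i) : minrank G ≤ mais G := by
  classical
  by_cases hac : AcyclicOn G Finset.univ
  · have h1 : (Finset.univ : Finset (Fin n)).card ≤ mais G := le_mais hac
    rw [Finset.card_univ, Fintype.card_fin] at h1
    exact minrank_le_n.trans h1
  · obtain ⟨S, hne, σ, hσ⟩ := exists_cycStruct hG hac
    have h1 : minrank G ≤ n - 1 := minrank_le_pred S hne σ hσ
    by_cases hm : n - 1 ≤ mais G
    · exact h1.trans hm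
    · push_neg at hm
      have hn1 : n ≠ 0 := by
        intro h0
        subst h0
        exact hac (fun i => i.elim0)
      have hmais1 : 1 ≤ mais G := one_le_mais hG ⟨0, Nat.pos_of_ne_zero hn1⟩
      have hn3 : 3 ≤ n := by omega
      interval_cases n
      · -- n = 3
        have hcomp : ∀ a b : Fin 3, a ≠ b → G a b := by
          intro a b hab
          by_contra hnG
          have hpd : ¬(G a b ∧ G b a) := fun h => hnG h.1
          have hA : AcyclicOn G {a, b} := acyclic_pair hG a b hab hpd
          have h2 := le_mais hA
          rw [Finset.card_insert_of_notMem (by simp [hab]), Finset.card_singleton] at h2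
          omega
        exact (minrank_le_one hG hcomp).trans hmais1
      · -- n = 4
        by_cases hm1 : mais G ≤ 1
        · have hcomp : ∀ a b : Fin 4, a ≠ b → G a b := by
            intro a b hab
            by_contra hnG
            have hpd : ¬(G a b ∧ G b a) := fun h => hnG h.1
            have hA : AcyclicOn G {a, b} := acyclic_pair hG a b hab hpd
            have h2 := le_mais hA
            rw [Finset.card_insert_of_notMem (by simp [hab]), Finset.card_singleton] at h2
            omega
          exact (minrank_le_one hG hcomp).trans hmais1
        · push_neg at hm1
          have hT : ∀ x y z : Fin 4, x ≠ y → x ≠ z → y ≠ z →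
              (G x y ∧ G y x) ∨ (G x z ∧ G z x) ∨ (G y z ∧ G z y) ∨
              (G x y ∧ G y z ∧ G z x) ∨ (G x z ∧ G z y ∧ G y x) := by
            intro x y z hxy hxz hyz
            by_contra hc
            simp only [not_or] at hc
            obtain ⟨c1, c2, c3, c4, c5⟩ := hc
            have hA : AcyclicOn G {x, y, z} :=
              acyclic_triple hG x y z hxy hxz hyz c1 c2 c3 c4 c5
            have h2 := le_mais hA
            rw [Finset.card_insert_of_notMem (by simp [hxy, hxz]),
              Finset.card_insert_of_notMem (by simp [hyz]), Finset.card_singleton] at h2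
            omega
          exact (minrank_le_two hT).trans hm1

end Final


/-- For every side-information digraph with at most 4 vertices,
`ℓ*(G) = mais G = minrank G`. -/
theorem stmt9 {n : ℕ} (hn : n ≤ 4) (G : Fin n → Fin n → Prop) (hG : ∀ i, ¬ G i i) :
    optLen G = mais G ∧ mais G = minrank G := by
  have hA : mais G ≤ optLen G := mais_le_optLen
  have hB : optLen G ≤ minrank G := optLen_le_minrank hG
  have hC : minrank G ≤ mais G := minrank_le_mais hn hG
  exact ⟨le_antisymm (hB.trans hC) hA, le_antisymm (hA.trans hB) hC⟩
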